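/- Let γ > 0. Define erfi(x) = (2/√π)∫_0^x e^{t²} dt and K(z) = −(1/γ)·√((1−z)/z³)·(2z−1)·e^{1/(2z)} + (√(2πe)/γ)·erfi(√((1−z)/(2z))) for z ∈ (0,1). Then K is differentiable on (0,1) with K'(z) = −e^{1/(2z)} / (2γ·z^{7/2}·√(1−z)) for every z ∈ (0,1). -/

import Mathlib

/-- The imaginary error function erfi(x) = (2/√π)∫_0^x e^{t²} dt. -/
noncomputable def erfi (x : ℝ) : ℝ :=
  (2 / Real.sqrt Real.pi) * ∫ t in (0 : ℝ)..x, Real.exp (t ^ 2)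

/-- Optimal homodyne function
K(z) = −(1/γ)√((1−z)/z³)(2z−1)e^{1/(2z)} + (√(2πe)/γ)erfi(√((1−z)/(2z))). -/
noncomputable def Khom (γ z : ℝ) : ℝ :=
  -(1 / γ) * Real.sqrt ((1 - z) / z ^ 3) * (2 * z - 1) * Real.exp (1 / (2 * z))
    + (Real.sqrt (2 * Real.pi * Real.exp 1) / γ) *
        erfi (Real.sqrt ((1 - z) / (2 * z)))

set_option maxHeartbeats 1000000

lemma erfi_hasDerivAt (x : ℝ) :
    HasDerivAt erfi (2 / Real.sqrt Real.pi * Real.exp (x ^ 2)) x := by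
  have hc : Continuous fun t : ℝ => Real.exp (t ^ 2) := by continuity
  have h := (hc.integral_hasStrictDerivAt 0 x).hasDerivAt
  exact h.const_mul (2 / Real.sqrt Real.pi)

/-- K is an antiderivative of −2/(QB²) = −e^{1/(2z)}/(2γ z^{7/2} √(1−z)) on
(0,1). -/
theorem hom_K_hasDerivAt (γ : ℝ) (hγ : 0 < γ) :
    ∀ z ∈ Set.Ioo (0 : ℝ) 1,
      HasDerivAt (Khom γ)
        (-Real.exp (1 / (2 * z)) /
          (2 * γ * z ^ ((7 : ℝ) / 2) * Real.sqrt (1 - z))) z := by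
  intro z hz
  obtain ⟨hz0, hz1⟩ := hz
  have hz1' : (0 : ℝ) < 1 - z := by linarith
  have hs0 : 0 < Real.sqrt z := Real.sqrt_pos.2 hz0
  have ht0 : 0 < Real.sqrt (1 - z) := Real.sqrt_pos.2 hz1'
  set s := Real.sqrt z with hs_def
  set t := Real.sqrt (1 - z) with ht_def
  have hs2 : s ^ 2 = z := Real.sq_sqrt hz0.le
  have ht2 : t ^ 2 = 1 - z := Real.sq_sqrt hz1'.le
  have hq0 : 0 < (1 - z) / z ^ 3 := by positivity
  have hr0 : 0 < (1 - z) / (2 * z) := by positivity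
  -- derivative of q = (1-z)/z^3
  have hq : HasDerivAt (fun z : ℝ => (1 - z) / z ^ 3) ((2 * z - 3) / z ^ 4) z := by
    have h1 : HasDerivAt (fun z : ℝ => 1 - z) (-1) z := by
      simpa using (hasDerivAt_id z).const_sub 1
    have h2 : HasDerivAt (fun z : ℝ => z ^ 3) (3 * z ^ 2) z := by
      simpa using hasDerivAt_pow 3 z
    have h3 : HasDerivAt (fun z : ℝ => (1 - z) / z ^ 3)
        ((-1 * z ^ 3 - (1 - z) * (3 * z ^ 2)) / (z ^ 3) ^ 2) z := h1.div h2 (by positivity)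
    convert h3 using 1
    field_simp
    ring
  have hsqrtq : HasDerivAt (fun z : ℝ => Real.sqrt ((1 - z) / z ^ 3))
      (1 / (2 * Real.sqrt ((1 - z) / z ^ 3)) * ((2 * z - 3) / z ^ 4)) z :=
    (Real.hasDerivAt_sqrt hq0.ne').comp z hq
  -- derivative of 1/(2z)
  have hinner : HasDerivAt (fun z : ℝ => 1 / (2 * z)) (-1 / (2 * z ^ 2)) z := by
    have h2 : HasDerivAt (fun z : ℝ => 2 * z) 2 z := by
      simpa using (hasDerivAt_id z).const_mul 2
    have h3 : HasDerivAt (fun z : ℝ => 1 / (2 * z)) ((0 * (2 * z) - 1 * 2) / (2 * z) ^ 2) z :=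
      (hasDerivAt_const z (1 : ℝ)).div h2 (by positivity)
    convert h3 using 1
    field_simp
    ring
  have hexp : HasDerivAt (fun z : ℝ => Real.exp (1 / (2 * z)))
      (Real.exp (1 / (2 * z)) * (-1 / (2 * z ^ 2))) z := hinner.exp
  -- derivative of r = (1-z)/(2z)
  have hr : HasDerivAt (fun z : ℝ => (1 - z) / (2 * z)) (-1 / (2 * z ^ 2)) z := by
    have h1 : HasDerivAt (fun z : ℝ => 1 - z) (-1) z := by
      simpa using (hasDerivAt_id z).const_sub 1
    have h2 : HasDerivAt (fun z : ℝ => 2 * z) 2 z := by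
      simpa using (hasDerivAt_id z).const_mul 2
    have h3 : HasDerivAt (fun z : ℝ => (1 - z) / (2 * z))
        ((-1 * (2 * z) - (1 - z) * 2) / (2 * z) ^ 2) z := h1.div h2 (by positivity)
    convert h3 using 1
    field_simp
    ring
  have hu : HasDerivAt (fun z : ℝ => Real.sqrt ((1 - z) / (2 * z)))
      (1 / (2 * Real.sqrt ((1 - z) / (2 * z))) * (-1 / (2 * z ^ 2))) z :=
    (Real.hasDerivAt_sqrt hr0.ne').comp z hr
  have herfi : HasDerivAt (fun z : ℝ => erfi (Real.sqrt ((1 - z) / (2 * z))))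
      (2 / Real.sqrt Real.pi * Real.exp (Real.sqrt ((1 - z) / (2 * z)) ^ 2) *
        (1 / (2 * Real.sqrt ((1 - z) / (2 * z))) * (-1 / (2 * z ^ 2)))) z :=
    (erfi_hasDerivAt _).comp z hu
  -- assemble
  have hA : HasDerivAt (fun z : ℝ => -(1 / γ) * Real.sqrt ((1 - z) / z ^ 3))
      (-(1 / γ) * (1 / (2 * Real.sqrt ((1 - z) / z ^ 3)) * ((2 * z - 3) / z ^ 4))) z :=
    hsqrtq.const_mul _
  have hlin : HasDerivAt (fun z : ℝ => 2 * z - 1) 2 z := by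
    simpa using ((hasDerivAt_id z).const_mul 2).sub_const 1
  have hB := hA.mul hlin
  have hC := hB.mul hexp
  have hD := herfi.const_mul (Real.sqrt (2 * Real.pi * Real.exp 1) / γ)
  have htotal := hC.add hD
  have hK : HasDerivAt (Khom γ)
      ((-(1 / γ) * (1 / (2 * Real.sqrt ((1 - z) / z ^ 3)) * ((2 * z - 3) / z ^ 4)) *
          (2 * z - 1) +
        -(1 / γ) * Real.sqrt ((1 - z) / z ^ 3) * 2) * Real.exp (1 / (2 * z)) +
        -(1 / γ) * Real.sqrt ((1 - z) / z ^ 3) * (2 * z - 1) *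
          (Real.exp (1 / (2 * z)) * (-1 / (2 * z ^ 2))) +
        Real.sqrt (2 * Real.pi * Real.exp 1) / γ *
          (2 / Real.sqrt Real.pi * Real.exp (Real.sqrt ((1 - z) / (2 * z)) ^ 2) *
            (1 / (2 * Real.sqrt ((1 - z) / (2 * z))) * (-1 / (2 * z ^ 2))))) z := htotal
  -- now rewrite the derivative into the target form
  have hq_eq : Real.sqrt ((1 - z) / z ^ 3) = t / s ^ 3 := by
    rw [Real.sqrt_div hz1'.le, ht_def, hs_def]
    congr 1
    rw [show z ^ 3 = (Real.sqrt z ^ 3) ^ 2 by rw [← pow_mul, pow_mul', Real.sq_sqrt hz0.le]]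
    exact Real.sqrt_sq (by positivity)
  have hr_eq : Real.sqrt ((1 - z) / (2 * z)) = t / (Real.sqrt 2 * s) := by
    rw [Real.sqrt_div hz1'.le, Real.sqrt_mul (by norm_num) z]
  have hrsq : Real.sqrt ((1 - z) / (2 * z)) ^ 2 = (1 - z) / (2 * z) :=
    Real.sq_sqrt hr0.le
  have hexp_split : Real.exp ((1 - z) / (2 * z)) =
      Real.exp (1 / (2 * z)) * Real.exp (-(1 / 2)) := by
    rw [← Real.exp_add]
    congr 1
    field_simp
    ring
  have hsqrt_e : Real.sqrt (Real.exp 1) = Real.exp (1 / 2) := by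
    rw [show Real.exp 1 = Real.exp (1 / 2) ^ 2 by
      rw [sq, ← Real.exp_add]; norm_num]
    exact Real.sqrt_sq (Real.exp_pos _).le
  have hsqrt2pe : Real.sqrt (2 * Real.pi * Real.exp 1) =
      Real.sqrt 2 * Real.sqrt Real.pi * Real.exp (1 / 2) := by
    rw [Real.sqrt_mul (by positivity), Real.sqrt_mul (by norm_num), hsqrt_e]
  have h72 : z ^ ((7 : ℝ) / 2) = z ^ 3 * s := by
    rw [show (7 : ℝ) / 2 = ((3 : ℕ) : ℝ) + 1 / 2 by norm_num, Real.rpow_add hz0,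
      Real.rpow_natCast, ← Real.sqrt_eq_rpow]
  have hpi : Real.sqrt Real.pi > 0 := Real.sqrt_pos.2 Real.pi_pos
  have hsqrt2 : Real.sqrt 2 > 0 := by positivity
  have h22 : Real.sqrt 2 * Real.sqrt 2 = 2 := Real.mul_self_sqrt (by norm_num)
  have hee : Real.exp (1 / 2) * Real.exp (-(1 / 2)) = 1 := by
    rw [← Real.exp_add]; norm_num
  convert hK using 1
  rw [hq_eq, hrsq, hexp_split, hr_eq, hsqrt2pe, h72]
  have hzz : z = s ^ 2 := hs2.symm
  have hz3 : z ^ 3 = s ^ 6 := by rw [hzz]; ring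
  have hz4 : z ^ 4 = s ^ 8 := by rw [hzz]; ring
  have hz2 : z ^ 2 = s ^ 4 := by rw [hzz]; ring
  set e := Real.exp (1 / (2 * z)) with he_def
  rw [hz3, hz4, hz2]
  rw [hzz]
  have hts : t ^ 2 = 1 - s ^ 2 := by rw [ht2, hzz]
  have h22' : Real.sqrt 2 ^ 2 = 2 := Real.sq_sqrt (by norm_num)
  have hE : Real.exp (1 / 2) * Real.exp (-1 / 2) = 1 := by
    rw [← Real.exp_add]; norm_num
  have hneghalf : Real.exp (-(1 / 2) : ℝ) = Real.exp (-1 / 2) := by norm_num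
  rw [hneghalf]
  field_simp
  linear_combination
      (-e * (-4 * s ^ 4 + 2 * s ^ 2 - 1)) * hts +
      (e * s ^ 4 * Real.sqrt 2 ^ 2) * hee + (e * s ^ 4) * h22'
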